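/- arXiv:2111.14761 — 2 statements merged into one kernel-verified Lean document; each statement's English description precedes it below -/
import Mathlib

section
/- Suppose σ_k ≥ (L/2 + 1)/(1 − η₂) in the ARIG setting (f with L-Lipschitz gradient, gradient error threshold ω ≤ 1/σ_k, step s_k = −(1/σ_k)g_k with ‖g_k − ∇f(x_k)‖ ≤ ω‖g_k‖). Then the ratio ρ_k = (f(x_k) − f(x_k + s_k))/((1/σ_k)‖g_k‖²) satisfies ρ_k ≥ η₂. -/
open scoped RealInnerProductSpace

lemma descent_lemma {n : ℕ} (f : EuclideanSpace ℝ (Fin n) → ℝ)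
    (f' : EuclideanSpace ℝ (Fin n) → EuclideanSpace ℝ (Fin n))
    (L : ℝ) (x s : EuclideanSpace ℝ (Fin n))
    (hf' : ∀ y, HasGradientAt f (f' y) y) (hL : 0 ≤ L)
    (hLip : LipschitzWith (Real.toNNReal L) f') :
    f (x + s) ≤ f x + ⟪f' x, s⟫ + L / 2 * ‖s‖ ^ 2 := by
  set φ : ℝ → ℝ := fun t => f (x + t • s) with hφ
  set B : ℝ → ℝ := fun t => f x + t * ⟪f' x, s⟫ + L / 2 * t ^ 2 * ‖s‖ ^ 2 with hB
  have hφ' : ∀ t : ℝ, HasDerivAt φ ⟪f' (x + t • s), s⟫ t := by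
    intro t
    have h1 : HasDerivAt (fun t : ℝ => x + t • s) s t := by
      simpa using ((hasDerivAt_id t).smul_const s).const_add x
    have h2 := ((hf' (x + t • s)).hasFDerivAt).comp_hasDerivAt t h1
    simp [InnerProductSpace.toDual_apply_apply] at h2; exact h2
  have hB' : ∀ t : ℝ, HasDerivAt B (⟪f' x, s⟫ + L * t * ‖s‖ ^ 2) t := by
    intro t
    have : HasDerivAt (fun t : ℝ => f x + t * ⟪f' x, s⟫ + L / 2 * t ^ 2 * ‖s‖ ^ 2)
        (0 + 1 * ⟪f' x, s⟫ + L / 2 * (2 * t ^ 1) * ‖s‖ ^ 2) t := by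
      exact (((hasDerivAt_const t (f x)).add
        ((hasDerivAt_id t).mul_const _)).add
        (((hasDerivAt_pow 2 t).const_mul (L / 2)).mul_const _))
    convert this using 1
    ring
  have key : φ 1 ≤ B 1 := by
    refine image_le_of_deriv_right_le_deriv_boundary
      (f := φ) (f' := fun t => ⟪f' (x + t • s), s⟫) (a := 0) (b := 1)
      (fun t _ => (hφ' t).continuousAt.continuousWithinAt)
      (fun t _ => (hφ' t).hasDerivWithinAt)
      (by simp [hφ, hB]) (fun t _ => (hB' t).continuousAt.continuousWithinAt)
      (fun t _ => (hB' t).hasDerivWithinAt) ?_ (by norm_num : (1:ℝ) ∈ Set.Icc 0 1)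
    intro t ht
    have h1 : ⟪f' (x + t • s) - f' x, s⟫ ≤ ‖f' (x + t • s) - f' x‖ * ‖s‖ :=
      real_inner_le_norm _ _
    have h2 : ‖f' (x + t • s) - f' x‖ ≤ L * (t * ‖s‖) := by
      have := hLip.dist_le_mul (x + t • s) x
      rw [dist_eq_norm] at this
      have ht0 := ht.1
      calc ‖f' (x + t • s) - f' x‖ ≤ (L.toNNReal : ℝ) * dist (x + t • s) x := this
        _ = L * ‖t • s‖ := by
            rw [dist_eq_norm]
            congr 1
            · exact Real.coe_toNNReal L hL
            · congr 1; abel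
        _ = L * (t * ‖s‖) := by rw [norm_smul, Real.norm_of_nonneg ht0]
    have : ⟪f' (x + t • s), s⟫ - ⟪f' x, s⟫ ≤ L * t * ‖s‖ ^ 2 := by
      rw [← inner_sub_left]
      calc ⟪f' (x + t • s) - f' x, s⟫ ≤ ‖f' (x + t • s) - f' x‖ * ‖s‖ := h1
        _ ≤ L * (t * ‖s‖) * ‖s‖ := by
            apply mul_le_mul_of_nonneg_right h2 (norm_nonneg s)
        _ = L * t * ‖s‖ ^ 2 := by ring
    linarith
  have h1 : φ 1 = f (x + s) := by simp [hφ]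
  have hB1 : B 1 = f x + ⟪f' x, s⟫ + L / 2 * ‖s‖ ^ 2 := by simp [hB]
  linarith [key, h1 ▸ hB1 ▸ key]

theorem stmt_2 {n : ℕ} (f : EuclideanSpace ℝ (Fin n) → ℝ)
    (f' : EuclideanSpace ℝ (Fin n) → EuclideanSpace ℝ (Fin n))
    (L σ ω η₂ : ℝ) (x g s : EuclideanSpace ℝ (Fin n))
    (hf : ContDiff ℝ 1 f)
    (hf' : ∀ y, HasGradientAt f (f' y) y)
    (hL : 0 < L)
    (hLip : LipschitzWith (Real.toNNReal L) f')
    (hη2 : 0 < η₂) (hη2' : η₂ < 1)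
    (hσ : σ ≥ (L / 2 + 1) / (1 - η₂))
    (hω : 0 < ω) (hωσ : ω ≤ 1 / σ)
    (hg : g ≠ 0)
    (herr : ‖g - f' x‖ ≤ ω * ‖g‖)
    (hs : s = -(1 / σ) • g) :
    (f x - f (x + s)) / ((1 / σ) * ‖g‖ ^ 2) ≥ η₂ := by
  have hη : 0 < 1 - η₂ := by linarith
  have hσpos : 0 < σ :=
    lt_of_lt_of_le (div_pos (by linarith) hη) hσ
  have hgn : 0 < ‖g‖ := norm_pos_iff.mpr hg
  have hgn2 : 0 < ‖g‖ ^ 2 := by positivity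
  have hdesc := descent_lemma f f' L x s hf' hL.le hLip
  -- compute inner product and norm of s
  have hinner : ⟪f' x, s⟫ = -(1/σ) * ⟪f' x, g⟫ := by
    rw [hs, real_inner_smul_right]
  have hns : ‖s‖ ^ 2 = (1/σ)^2 * ‖g‖ ^ 2 := by
    rw [hs, norm_smul]
    rw [Real.norm_eq_abs, abs_neg, abs_of_nonneg (by positivity : (0:ℝ) ≤ 1/σ)]
    ring
  have hinner2 : ⟪f' x, g⟫ ≥ (1 - ω) * ‖g‖ ^ 2 := by
    have h1 : ⟪g - f' x, g⟫ ≤ ω * ‖g‖ ^ 2 := by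
      calc ⟪g - f' x, g⟫ ≤ ‖g - f' x‖ * ‖g‖ := real_inner_le_norm _ _
        _ ≤ ω * ‖g‖ * ‖g‖ := mul_le_mul_of_nonneg_right herr (norm_nonneg g)
        _ = ω * ‖g‖ ^ 2 := by ring
    have h2 : ⟪g - f' x, g⟫ = ‖g‖^2 - ⟪f' x, g⟫ := by
      rw [inner_sub_left, real_inner_self_eq_norm_sq]
    nlinarith
  -- main estimate
  have hωσ' : ω * σ ≤ 1 := by
    rw [← le_div_iff₀ hσpos] at *; exact hωσ
  have hσ' : L / 2 + 1 ≤ σ * (1 - η₂) := by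
    rw [ge_iff_le, div_le_iff₀ hη] at hσ; linarith
  rw [ge_iff_le, le_div_iff₀ (by positivity)]
  have key : f x - f (x + s) ≥ (1/σ) * ⟪f' x, g⟫ - L / 2 * (1/σ)^2 * ‖g‖^2 := by
    have := hdesc
    rw [hinner, hns] at this
    linarith
  have step : (1/σ) * ⟪f' x, g⟫ - L / 2 * (1/σ)^2 * ‖g‖^2 ≥ η₂ * ((1/σ) * ‖g‖^2) := by
    have h3 : (1/σ) * ⟪f' x, g⟫ ≥ (1/σ) * ((1 - ω) * ‖g‖ ^ 2) :=
      mul_le_mul_of_nonneg_left hinner2 (by positivity)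
    have h4 : (1 - ω) - L / 2 * (1/σ) ≥ η₂ := by
      have h5 : (1:ℝ)/σ * σ = 1 := by field_simp
      have h6 : L / 2 * (1/σ) * σ = L / 2 := by field_simp
      nlinarith [mul_pos hσpos hη]
    nlinarith [mul_pos (show (0:ℝ) < 1/σ by positivity) hgn2]
  linarith
end

section
/- Let s, y ∈ ℝⁿ satisfy sᵀy ≥ γ‖s‖² with γ > 0 and ‖y‖ ≤ L_y‖s‖ with L_y > 0, let μ > 0, ρ = 1/(sᵀy), V = I − ρ s yᵀ, and A = μVVᵀ + ρ s sᵀ. Then λ_max(A) ≤ 1/γ + max(0, (μ/γ²)L_y² − μ/(1 + (μ/γ)L_y²)). -/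
set_option maxHeartbeats 1000000

open Matrix RealInnerProductSpace
open scoped Matrix


lemma key_scalar (S Y t a b X μ γ Ly : ℝ) (hS : 0 < S) (hγ : 0 < γ) (hLy : 0 < Ly)
    (hμ : 0 < μ) (ht : γ * S ≤ t) (hY : Y ≤ Ly ^ 2 * S) (hY0 : 0 ≤ Y) (hX : 0 ≤ X)
    (ha : a ^ 2 ≤ S * X)
    (hD : Y * a ^ 2 - 2 * t * (a * b) + S * b ^ 2 ≤ X * (S * Y - t ^ 2)) :
    μ * X - 2 * μ * (a * b) / t + (μ * Y / t ^ 2 + 1 / t) * a ^ 2 ≤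
      (1 / γ + (μ / γ ^ 2) * Ly ^ 2 - μ / (1 + (μ / γ) * Ly ^ 2)) * X := by
  have ht0 : 0 < t := lt_of_lt_of_le (mul_pos hγ hS) ht
  set δ : ℝ := γ / Ly ^ 2 with hδ
  have hδ0 : 0 < δ := div_pos hγ (by positivity)
  set lam : ℝ := (μ + δ) / t ^ 2 with hlam
  have hlam0 : 0 < lam := div_pos (by linarith) (by positivity)
  set q : ℝ := μ * X - 2 * μ * (a * b) / t + (μ * Y / t ^ 2 + 1 / t) * a ^ 2 with hq
  set coeff : ℝ := -lam * Y + μ * Y / t ^ 2 + 1 / t + (lam * t - μ / t) ^ 2 / (lam * S)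
    with hcoeff
  set bstar : ℝ := (lam * t - μ / t) * a / (lam * S) with hbstar
  -- step 1+2 : q ≤ μX + lam X (SY - t²) + coeff a² - lam S (b - bstar)²
  have step2 : q ≤ μ * X + lam * X * (S * Y - t ^ 2) + coeff * a ^ 2
      - lam * S * (b - bstar) ^ 2 := by
    have h1 : q ≤ q + lam * (X * (S * Y - t ^ 2)
        - (Y * a ^ 2 - 2 * t * (a * b) + S * b ^ 2)) := by nlinarith [hlam0.le]
    have h2 : q + lam * (X * (S * Y - t ^ 2) - (Y * a ^ 2 - 2 * t * (a * b) + S * b ^ 2))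
        = μ * X + lam * X * (S * Y - t ^ 2) + coeff * a ^ 2 - lam * S * (b - bstar) ^ 2 := by
      rw [hq, hcoeff, hbstar]
      field_simp
      ring
    linarith [h1, h2.le]
  -- coeff ≥ 0
  have hδY : δ * Y ≤ t := by
    have h1 : δ * Y ≤ δ * (Ly ^ 2 * S) := by nlinarith
    have h2 : δ * (Ly ^ 2 * S) = γ * S := by rw [hδ]; field_simp
    linarith
  have hcoeff0 : 0 ≤ coeff := by
    have hlt : lam * t - μ / t = δ / t := by rw [hlam]; field_simp; ring
    have h3 : -lam * Y + μ * Y / t ^ 2 = -(δ * Y) / t ^ 2 := by rw [hlam]; field_simp; ring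
    rw [hcoeff, hlt, h3]
    have h4 : 0 ≤ (δ / t) ^ 2 / (lam * S) := by positivity
    have h5 : -(δ * Y) / t ^ 2 + 1 / t ≥ 0 := by
      rw [ge_iff_le, ← sub_nonneg] at *
      have : (t - δ * Y) / t ^ 2 ≥ 0 := by positivity
      calc (0:ℝ) ≤ (t - δ * Y) / t ^ 2 := this
        _ = -(δ * Y) / t ^ 2 + 1 / t - 0 := by field_simp; ring
    linarith
  -- step 3 : drop square, bound a²
  have step3 : q ≤ μ * X + lam * X * (S * Y - t ^ 2) + coeff * (S * X) := by
    nlinarith [mul_le_mul_of_nonneg_left ha hcoeff0, mul_nonneg (mul_nonneg hlam0.le hS.le) (sq_nonneg (b - bstar))]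
  -- step 4 : identity
  have step4 : μ * X + lam * X * (S * Y - t ^ 2) + coeff * (S * X)
      = X * (S / t + μ * S * Y / t ^ 2 - μ + μ ^ 2 / (lam * t ^ 2)) := by
    rw [hcoeff, hlam]
    field_simp
    ring
  -- step 5 : final bounds
  have hSt : S / t ≤ 1 / γ := by
    rw [div_le_div_iff₀ ht0 hγ]
    linarith
  have hSY : μ * S * Y / t ^ 2 ≤ (μ / γ ^ 2) * Ly ^ 2 := by
    have h1 : γ ^ 2 * S ^ 2 ≤ t ^ 2 := by nlinarith [mul_le_mul ht ht (mul_pos hγ hS).le ht0.le]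
    rw [div_le_iff₀ (by positivity)]
    have h2 : μ * S * Y ≤ μ * Ly ^ 2 * S ^ 2 := by nlinarith [mul_le_mul_of_nonneg_left hY (mul_pos hμ hS).le]
    have h3 : μ / γ ^ 2 * Ly ^ 2 * t ^ 2 ≥ μ / γ ^ 2 * Ly ^ 2 * (γ ^ 2 * S ^ 2) := by
      have : (0:ℝ) ≤ μ / γ ^ 2 * Ly ^ 2 := by positivity
      nlinarith
    have h4 : μ / γ ^ 2 * Ly ^ 2 * (γ ^ 2 * S ^ 2) = μ * Ly ^ 2 * S ^ 2 := by
      field_simp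
    linarith
  have hmu2 : μ ^ 2 / (lam * t ^ 2) = μ - μ / (1 + (μ / γ) * Ly ^ 2) := by
    rw [hlam, hδ]
    have h1 : (0:ℝ) < 1 + μ / γ * Ly ^ 2 := by positivity
    field_simp
    ring
  have step5 : X * (S / t + μ * S * Y / t ^ 2 - μ + μ ^ 2 / (lam * t ^ 2))
      ≤ (1 / γ + (μ / γ ^ 2) * Ly ^ 2 - μ / (1 + (μ / γ) * Ly ^ 2)) * X := by
    rw [hmu2]
    nlinarith [hSt, hSY, hX]
  calc q ≤ μ * X + lam * X * (S * Y - t ^ 2) + coeff * (S * X) := step3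
    _ = X * (S / t + μ * S * Y / t ^ 2 - μ + μ ^ 2 / (lam * t ^ 2)) := step4
    _ ≤ (1 / γ + (μ / γ ^ 2) * Ly ^ 2 - μ / (1 + (μ / γ) * Ly ^ 2)) * X := step5

lemma dot_cs {n : ℕ} (u v : Fin n → ℝ) : (u ⬝ᵥ v) ^ 2 ≤ (u ⬝ᵥ u) * (v ⬝ᵥ v) := by
  simpa [dotProduct, sq] using Finset.sum_mul_sq_le_sq_mul_sq Finset.univ u v

lemma dot_self_nonneg {n : ℕ} (v : Fin n → ℝ) : 0 ≤ v ⬝ᵥ v :=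
  Finset.sum_nonneg fun i _ => mul_self_nonneg _

lemma gram_ineq {n : ℕ} (s y x : Fin n → ℝ) :
    (y ⬝ᵥ y) * (s ⬝ᵥ x) ^ 2 - 2 * (s ⬝ᵥ y) * ((s ⬝ᵥ x) * (y ⬝ᵥ x)) + (s ⬝ᵥ s) * (y ⬝ᵥ x) ^ 2
      ≤ (x ⬝ᵥ x) * ((s ⬝ᵥ s) * (y ⬝ᵥ y) - (s ⬝ᵥ y) ^ 2) := by
  set S := s ⬝ᵥ s
  set Y := y ⬝ᵥ y
  set t := s ⬝ᵥ y
  set a := s ⬝ᵥ x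
  set b := y ⬝ᵥ x
  set X := x ⬝ᵥ x
  set D : ℝ := Y * a ^ 2 - 2 * t * (a * b) + S * b ^ 2 with hD
  set u : Fin n → ℝ := (Y * a - t * b) • s + (S * b - t * a) • y with hu
  have hts : t ^ 2 ≤ S * Y := dot_cs s y
  have hX : 0 ≤ X := dot_self_nonneg x
  have hux : u ⬝ᵥ x = D := by
    rw [hu, hD]
    simp [add_dotProduct, smul_dotProduct, smul_eq_mul]
    ring
  have huu : u ⬝ᵥ u = (S * Y - t ^ 2) * D := by
    rw [hu, hD]
    simp [add_dotProduct, dotProduct_add, smul_dotProduct,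
      dotProduct_smul, smul_eq_mul, dotProduct_comm y s]
    ring
  rcases le_or_gt D 0 with h | h
  · have : 0 ≤ X * (S * Y - t ^ 2) := mul_nonneg hX (by linarith)
    linarith
  · have hcs := dot_cs u x
    rw [hux, huu] at hcs
    nlinarith [hcs, h, hX]

lemma vmv_mulVec {n : ℕ} (u w x : Fin n → ℝ) :
    (vecMulVec u w) *ᵥ x = (w ⬝ᵥ x) • u := by
  ext i
  simp only [Matrix.mulVec, dotProduct, vecMulVec_apply, Pi.smul_apply, smul_eq_mul,
    Finset.sum_mul]
  exact Finset.sum_congr rfl fun j _ => by ring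

lemma quadform {n : ℕ} (s y x : Fin n → ℝ) (ρ μ : ℝ)
    (V A : Matrix (Fin n) (Fin n) ℝ)
    (hV : V = 1 - ρ • vecMulVec s y)
    (hA : A = μ • (V * Vᵀ) + ρ • vecMulVec s s) :
    x ⬝ᵥ (A *ᵥ x) = μ * ((x ⬝ᵥ x) - 2 * ρ * ((s ⬝ᵥ x) * (y ⬝ᵥ x))
      + ρ ^ 2 * (s ⬝ᵥ x) ^ 2 * (y ⬝ᵥ y)) + ρ * (s ⬝ᵥ x) ^ 2 := by
  have hVt : Vᵀ = 1 - ρ • vecMulVec y s := by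
    rw [hV, transpose_sub, transpose_one, transpose_smul]
    congr 1
    ext i j
    simp [vecMulVec_apply, transpose_apply, mul_comm]
  have hz : Vᵀ *ᵥ x = x - (ρ * (s ⬝ᵥ x)) • y := by
    rw [hVt, sub_mulVec, one_mulVec, smul_mulVec, vmv_mulVec, smul_smul]
  have hmain : x ⬝ᵥ (A *ᵥ x)
      = μ * ((Vᵀ *ᵥ x) ⬝ᵥ (Vᵀ *ᵥ x)) + ρ * ((s ⬝ᵥ x) * (s ⬝ᵥ x)) := by
    rw [hA, add_mulVec, smul_mulVec, smul_mulVec, dotProduct_add,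
      dotProduct_smul, dotProduct_smul, ← mulVec_mulVec, dotProduct_mulVec,
      ← mulVec_transpose, vmv_mulVec, dotProduct_smul, smul_eq_mul, smul_eq_mul,
      dotProduct_comm x s]
    simp [smul_eq_mul]
  rw [hmain, hz]
  simp only [dotProduct_sub, sub_dotProduct, dotProduct_smul, smul_dotProduct, smul_eq_mul,
    dotProduct_comm y x]
  ring

theorem stmt_9 {n : ℕ} (s y : Fin n → ℝ) (γ Ly μ ρ : ℝ)
    (hγ : 0 < γ) (hLy : 0 < Ly) (hμ : 0 < μ) (hs : s ≠ 0)
    (hsy : s ⬝ᵥ y ≥ γ * (s ⬝ᵥ s))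
    (hy : Real.sqrt (y ⬝ᵥ y) ≤ Ly * Real.sqrt (s ⬝ᵥ s))
    (hρ : ρ = 1 / (s ⬝ᵥ y))
    (V A : Matrix (Fin n) (Fin n) ℝ)
    (hV : V = 1 - ρ • vecMulVec s y)
    (hA : A = μ • (V * Vᵀ) + ρ • vecMulVec s s)
    (hAh : A.IsHermitian) :
    ∀ i, hAh.eigenvalues i ≤
      1 / γ + max 0 ((μ / γ ^ 2) * Ly ^ 2 - μ / (1 + (μ / γ) * Ly ^ 2)) := by
  intro i
  -- basic scalar facts
  have hS0 : 0 < s ⬝ᵥ s := by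
    rcases lt_or_eq_of_le (dot_self_nonneg s) with h | h
    · exact h
    · exact absurd (dotProduct_self_eq_zero.mp h.symm) hs
  have ht0 : 0 < s ⬝ᵥ y := lt_of_lt_of_le (mul_pos hγ hS0) hsy
  have hY0 : 0 ≤ y ⬝ᵥ y := dot_self_nonneg y
  have hYle : y ⬝ᵥ y ≤ Ly ^ 2 * (s ⬝ᵥ s) := by
    have h1 := mul_self_le_mul_self (Real.sqrt_nonneg (y ⬝ᵥ y)) hy
    rw [Real.mul_self_sqrt hY0] at h1
    calc y ⬝ᵥ y ≤ Ly * Real.sqrt (s ⬝ᵥ s) * (Ly * Real.sqrt (s ⬝ᵥ s)) := h1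
      _ = Ly ^ 2 * (Real.sqrt (s ⬝ᵥ s) * Real.sqrt (s ⬝ᵥ s)) := by ring
      _ = Ly ^ 2 * (s ⬝ᵥ s) := by rw [Real.mul_self_sqrt hS0.le]
  -- the eigenvector
  set w : Fin n → ℝ := ⇑(hAh.eigenvectorBasis i) with hw
  have hv : A *ᵥ w = hAh.eigenvalues i • w := hAh.mulVec_eigenvectorBasis i
  have hw1 : w ⬝ᵥ w = 1 := by
    have hnorm : ‖hAh.eigenvectorBasis i‖ = 1 := hAh.eigenvectorBasis.orthonormal.1 i
    have h2 : (inner ℝ (hAh.eigenvectorBasis i) (hAh.eigenvectorBasis i) : ℝ) = 1 := by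
      rw [real_inner_self_eq_norm_sq, hnorm]; norm_num
    rw [← h2]
    simp only [PiLp.inner_apply, RCLike.inner_apply, conj_trivial, dotProduct, hw, mul_comm]
  have heig : hAh.eigenvalues i = w ⬝ᵥ (A *ᵥ w) := by
    rw [hv, dotProduct_smul, hw1, smul_eq_mul, mul_one]
  rw [heig, quadform s y w ρ μ V A hV hA]
  -- apply the key scalar inequality with X = 1
  have hDg := gram_ineq s y w
  have ha2 : (s ⬝ᵥ w) ^ 2 ≤ (s ⬝ᵥ s) * (w ⬝ᵥ w) := dot_cs s w
  rw [hw1] at hDg ha2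
  have key := key_scalar (s ⬝ᵥ s) (y ⬝ᵥ y) (s ⬝ᵥ y) (s ⬝ᵥ w) (y ⬝ᵥ w) 1 μ γ Ly
    hS0 hγ hLy hμ hsy hYle hY0 zero_le_one (by linarith [ha2]) (by linarith [hDg])
  have hq : μ * (1 - 2 * ρ * ((s ⬝ᵥ w) * (y ⬝ᵥ w)) + ρ ^ 2 * (s ⬝ᵥ w) ^ 2 * (y ⬝ᵥ y))
      + ρ * (s ⬝ᵥ w) ^ 2
      = μ * 1 - 2 * μ * ((s ⬝ᵥ w) * (y ⬝ᵥ w)) / (s ⬝ᵥ y)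
        + (μ * (y ⬝ᵥ y) / (s ⬝ᵥ y) ^ 2 + 1 / (s ⬝ᵥ y)) * (s ⬝ᵥ w) ^ 2 := by
    rw [hρ]
    field_simp
    ring
  rw [hw1, hq]
  have hmax : (μ / γ ^ 2) * Ly ^ 2 - μ / (1 + (μ / γ) * Ly ^ 2)
      ≤ max 0 ((μ / γ ^ 2) * Ly ^ 2 - μ / (1 + (μ / γ) * Ly ^ 2)) := le_max_right _ _
  calc μ * 1 - 2 * μ * ((s ⬝ᵥ w) * (y ⬝ᵥ w)) / (s ⬝ᵥ y)
        + (μ * (y ⬝ᵥ y) / (s ⬝ᵥ y) ^ 2 + 1 / (s ⬝ᵥ y)) * (s ⬝ᵥ w) ^ 2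
      ≤ (1 / γ + (μ / γ ^ 2) * Ly ^ 2 - μ / (1 + (μ / γ) * Ly ^ 2)) * 1 := key
    _ ≤ 1 / γ + max 0 ((μ / γ ^ 2) * Ly ^ 2 - μ / (1 + (μ / γ) * Ly ^ 2)) := by
        rw [mul_one]; linarith [hmax]
end
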